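/- (Lemma 4.2, combinatorial mapping from Blume-Capel to Ising.) Let G=(V,E) be a finite subgraph of Z^d, β>0, Δ∈ℝ, and ξ ∈ {-1,0,+1}^{Z^d}. Let μ^{Ising,ℓ(ξ)}_{ℓ(G),J} denote the Ising measure on the lifted graph ℓ(G) with boundary condition ℓ(ξ) and coupling constants J_{uv} = β/4 for uv ∈ E₁ and J_{uv} = (Δ + log 2)/2 for uv ∈ E₂. Then for every η ∈ {-1,0,1}^V, μ^ξ_{G,β,Δ}(σ = η) = μ^{Ising,ℓ(ξ)}_{ℓ(G),J}(τ ∈ T^{-1}(η)). -/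

import Mathlib

open Filter Topology

namespace BCIsing

abbrev Vtx (d : ℕ) := Fin d → ℤ

/-- Nearest-neighbour adjacency on `ℤ^d` (ℓ¹-distance one). -/
def adj {d : ℕ} (x y : Vtx d) : Prop := (∑ i, (x i - y i).natAbs) = 1

instance {d : ℕ} (x : Vtx d) : DecidablePred (adj x) := fun y => by
  unfold adj; infer_instance

/-- The finite set of lattice neighbours of `x`. -/
noncomputable def nbrs {d : ℕ} (x : Vtx d) : Finset (Vtx d) :=
  (Fintype.piFinset fun i => Finset.Icc (x i - 1) (x i + 1)).filter (adj x)

/-- Spins: `0, 1, 2 : Fin 3` encode the values `-1, 0, +1`. -/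
abbrev Spin := Fin 3

/-- The real value of a spin. -/
def sval (s : Spin) : ℝ := ((s : ℕ) : ℝ) - 1

/-- The box `[-n,n]^d ∩ ℤ^d`. -/
noncomputable def box (d n : ℕ) : Finset (Vtx d) :=
  Fintype.piFinset fun _ => Finset.Icc (-(n : ℤ)) n

/-- Extension of `f` on `Λ` by the boundary condition `η` outside of `Λ`. -/
def ext {d : ℕ} (Λ : Finset (Vtx d)) (η : Vtx d → Spin) (f : ↥Λ → Spin) : Vtx d → Spin :=
  fun x => if h : x ∈ Λ then f ⟨x, h⟩ else η x

/-- Blume–Capel Boltzmann weight of the configuration `f` in volume `Λ` with boundary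
condition `η`:  `exp(β Σ_{xy∈E(Λ)} σ_x σ_y + Δ Σ_{x∈Λ} σ_x² + β Σ_{x∈Λ,y∉Λ,x∼y} σ_x η_y)`
(every interior edge is counted once, whence the factor `β/2` in the double sum). -/
noncomputable def wt {d : ℕ} (Λ : Finset (Vtx d)) (β Δ : ℝ) (η : Vtx d → Spin)
    (f : ↥Λ → Spin) : ℝ :=
  Real.exp (β / 2 * ∑ x ∈ Λ, ∑ y ∈ nbrs x ∩ Λ, sval (ext Λ η f x) * sval (ext Λ η f y)
    + Δ * ∑ x ∈ Λ, sval (ext Λ η f x) ^ 2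
    + β * ∑ x ∈ Λ, ∑ y ∈ nbrs x \ Λ, sval (ext Λ η f x) * sval (η y))

/-- Finite-volume Blume–Capel expectation of the observable `g` in volume `Λ`
with boundary condition `η`. -/
noncomputable def finExp {d : ℕ} (Λ : Finset (Vtx d)) (β Δ : ℝ) (η : Vtx d → Spin)
    (g : (Vtx d → Spin) → ℝ) : ℝ :=
  (∑ f : ↥Λ → Spin, g (ext Λ η f) * wt Λ β Δ η f) / ∑ f : ↥Λ → Spin, wt Λ β Δ η f

/-- The plus boundary condition `η ≡ +1`. -/
def plusBC {d : ℕ} : Vtx d → Spin := fun _ => 2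

/-- The free (zero) boundary condition `η ≡ 0`. -/
def freeBC {d : ℕ} : Vtx d → Spin := fun _ => 1

/-- A local observable: one depending on finitely many spins. -/
def IsLocal {d : ℕ} (g : (Vtx d → Spin) → ℝ) : Prop :=
  ∃ S : Finset (Vtx d), ∀ σ σ' : Vtx d → Spin, (∀ x ∈ S, σ x = σ' x) → g σ = g σ'

/-- `E` is the infinite-volume plus-state expectation functional `⟨·⟩⁺_{β,Δ}`:
the weak limit, as `Λ ↑ ℤ^d`, of finite-volume plus-boundary-condition expectations. -/
def IsPlusState {d : ℕ} (E : ℝ → ℝ → ((Vtx d → Spin) → ℝ) → ℝ) : Prop :=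
  ∀ β Δ : ℝ, 0 < β → ∀ g : (Vtx d → Spin) → ℝ, IsLocal g →
    Tendsto (fun n => finExp (box d n) β Δ plusBC g) atTop (nhds (E β Δ g))

/-- The spin at the origin, `σ₀`. -/
noncomputable def spin0 {d : ℕ} : (Vtx d → Spin) → ℝ := fun σ => sval (σ 0)

/-- The critical inverse temperature `β_c(Δ) = inf{β>0 : ⟨σ₀⟩⁺_{β,Δ} > 0}`. -/
noncomputable def betaC {d : ℕ} (E : ℝ → ℝ → ((Vtx d → Spin) → ℝ) → ℝ) (Δ : ℝ) : ℝ :=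
  sInf {β : ℝ | 0 < β ∧ 0 < E β Δ (spin0 (d := d))}

/-- The sup-norm `‖x‖_∞` of a lattice point, as a real number. -/
noncomputable def normInf {d : ℕ} (x : Vtx d) : ℝ :=
  ((Finset.univ.sup fun i => (x i).natAbs : ℕ) : ℝ)


abbrev Edge (d : ℕ) := Sym2 (Vtx d)

/-- `e` is an edge of the subgraph of `ℤ^d` induced on `V`: its endpoints are adjacent
lattice points, both belonging to `V`. -/
def IsSubgraphEdge {d : ℕ} (V : Finset (Vtx d)) (e : Edge d) : Prop :=
  ∃ x y : Vtx d, x ∈ V ∧ y ∈ V ∧ adj x y ∧ e = s(x, y)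

/-- The real spin configuration determined by `f` on `V` and `ξ` off `V`. -/
noncomputable def sOf {d : ℕ} (V : Finset (Vtx d)) (ξ : Vtx d → Spin)
    (f : ↥V → Spin) : Vtx d → ℝ :=
  fun x => if h : x ∈ V then sval (f ⟨x, h⟩) else sval (ξ x)

/-- Blume–Capel Boltzmann weight on the subgraph `G = (V,E)` of `ℤ^d` with boundary
condition `ξ`:  `exp(β Σ_{xy∈E} σ_x σ_y + Δ Σ_{x∈V} σ_x² + β Σ_{xy∈E^d,x∈V,y∉V} σ_x ξ_y)`. -/
noncomputable def bcW {d : ℕ} (V : Finset (Vtx d)) (E : Finset (Edge d)) (β Δ : ℝ)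
    (ξ : Vtx d → Spin) (f : ↥V → Spin) : ℝ :=
  Real.exp (β * ∑ e ∈ E,
      Sym2.lift ⟨fun x y => sOf V ξ f x * sOf V ξ f y, fun _ _ => mul_comm _ _⟩ e
    + Δ * ∑ x ∈ V, sOf V ξ f x ^ 2
    + β * ∑ x ∈ V, ∑ y ∈ nbrs x \ V, sOf V ξ f x * sval (ξ y))

/-- The `±1` value of an Ising spin. -/
def pm (b : Bool) : ℝ := if b then 1 else -1

/-- The real values of the lifted Ising configuration `τ` on `ℓ(V) = V × {0,1}`
(extended by `0` off `V`, which is immaterial). -/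
noncomputable def tOf {d : ℕ} (V : Finset (Vtx d)) (τ : ↥V × Bool → Bool) :
    Vtx d → Bool → ℝ :=
  fun x i => if h : x ∈ V then pm (τ (⟨x, h⟩, i)) else 0

/-- Ising Boltzmann weight on the lifted graph `ℓ(G)` with coupling constants
`J = β/4` on the edges of `E₁` and `J = (Δ + log 2)/2` on the edges of `E₂`, with
boundary condition `ℓ(ξ)`:
`exp(Σ_{uv∈E₁} (β/4) τ_u τ_v + Σ_{uv∈E₂} ((Δ+log2)/2) τ_u τ_v
   + Σ (β/4) τ_u ℓ(ξ)_v)`,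
where for a lattice edge `xy ∈ E` the four `E₁`-edges `{(x,i),(y,j)}` contribute
`Σ_{i,j∈{0,1}} τ_{(x,i)} τ_{(y,j)}`, and similarly for the boundary edges. -/
noncomputable def isingW {d : ℕ} (V : Finset (Vtx d)) (E : Finset (Edge d)) (β Δ : ℝ)
    (ξ : Vtx d → Spin) (τ : ↥V × Bool → Bool) : ℝ :=
  Real.exp (β / 4 * ∑ e ∈ E,
      Sym2.lift ⟨fun x y => ∑ i : Bool, ∑ j : Bool, tOf V τ x i * tOf V τ y j,
        fun x y => by
          show (∑ i : Bool, ∑ j : Bool, tOf V τ x i * tOf V τ y j)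
              = ∑ i : Bool, ∑ j : Bool, tOf V τ y i * tOf V τ x j
          rw [Finset.sum_comm]
          exact Finset.sum_congr rfl fun i _ =>
            Finset.sum_congr rfl fun j _ => mul_comm _ _⟩ e
    + (Δ + Real.log 2) / 2 * ∑ x ∈ V, tOf V τ x false * tOf V τ x true
    + β / 4 * ∑ x ∈ V, ∑ y ∈ nbrs x \ V,
        ∑ i : Bool, ∑ j : Bool, tOf V τ x i * sval (ξ y))

private def Tm (a b : Bool) : Spin := if a = b then (if a then 2 else 0) else 1

private lemma sval_Tm (a b : Bool) : sval (Tm a b) = (pm a + pm b) / 2 := by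
  cases a <;> cases b <;> norm_num [Tm, pm, sval]

private lemma sval_injective : Function.Injective sval := by
  intro s t h
  fin_cases s <;> fin_cases t <;> norm_num [sval] at h <;> rfl

private lemma cond_iff_aux (a b : Bool) (s : Spin) :
    (pm a + pm b) / 2 = sval s ↔ Tm a b = s := by
  rw [← sval_Tm]
  exact ⟨fun h => sval_injective h, fun h => by rw [h]⟩

private lemma pm_add (a b : Bool) (s : Spin) (h : Tm a b = s) :
    pm a + pm b = 2 * sval s := by
  rw [← h, sval_Tm]; ring

private lemma pm_prod (a b : Bool) (c : ℝ) (h : pm a + pm b = 2 * c) :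
    pm a * pm b = 2 * c ^ 2 - 1 := by
  cases a <;> cases b <;> norm_num [pm] at h ⊢ <;> nlinarith [h]

private lemma sval_sq (s : Spin) : sval s ^ 2 = if s = 1 then 0 else 1 := by
  fin_cases s <;> norm_num [sval, Fin.ext_iff]

private lemma Scard (s : Spin) :
    (Finset.univ.filter fun h : Bool → Bool => Tm (h false) (h true) = s).card
      = if s = 1 then 2 else 1 := by fin_cases s <;> decide

open scoped Classical in
private lemma isingW_fiber (d : ℕ) (V : Finset (Vtx d)) (E : Finset (Edge d))
    (hE : ∀ e ∈ E, IsSubgraphEdge V e) (β Δ : ℝ) (ξ : Vtx d → Spin)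
    (f : ↥V → Spin) (τ : ↥V × Bool → Bool)
    (hτ : ∀ x : ↥V, Tm (τ (x, false)) (τ (x, true)) = f x) :
    isingW V E β Δ ξ τ = bcW V E β Δ ξ f *
      Real.exp (Real.log 2 * ∑ x ∈ V, sOf V ξ f x ^ 2
        - (Δ + Real.log 2) / 2 * V.card) := by
  have key : ∀ x : ↥V, pm (τ (x, false)) + pm (τ (x, true)) = 2 * sval (f x) :=
    fun x => pm_add _ _ _ (hτ x)
  have hA : (∑ e ∈ E,
        Sym2.lift ⟨fun x y => ∑ i : Bool, ∑ j : Bool, tOf V τ x i * tOf V τ y j,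
          fun x y => by
            show (∑ i : Bool, ∑ j : Bool, tOf V τ x i * tOf V τ y j)
                = ∑ i : Bool, ∑ j : Bool, tOf V τ y i * tOf V τ x j
            rw [Finset.sum_comm]
            exact Finset.sum_congr rfl fun i _ =>
              Finset.sum_congr rfl fun j _ => mul_comm _ _⟩ e)
      = 4 * ∑ e ∈ E,
        Sym2.lift ⟨fun x y => sOf V ξ f x * sOf V ξ f y, fun _ _ => mul_comm _ _⟩ e := by
    rw [Finset.mul_sum]
    refine Finset.sum_congr rfl fun e he => ?_
    obtain ⟨x, y, hx, hy, -, rfl⟩ := hE e he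
    rw [Sym2.lift_mk, Sym2.lift_mk]
    have h1 := key ⟨x, hx⟩
    have h2 := key ⟨y, hy⟩
    simp only [tOf, sOf, dif_pos hx, dif_pos hy, Fintype.sum_bool]
    linear_combination (pm (τ (⟨y, hy⟩, false)) + pm (τ (⟨y, hy⟩, true))) * h1
      + 2 * sval (f ⟨x, hx⟩) * h2
  have hB : (∑ x ∈ V, tOf V τ x false * tOf V τ x true)
      = 2 * (∑ x ∈ V, sOf V ξ f x ^ 2) - V.card := by
    have hpt : ∀ x ∈ V, tOf V τ x false * tOf V τ x true
        = 2 * sOf V ξ f x ^ 2 - 1 := by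
      intro x hx
      simp only [tOf, sOf, dif_pos hx]
      exact pm_prod _ _ _ (key ⟨x, hx⟩)
    rw [Finset.sum_congr rfl hpt, Finset.sum_sub_distrib, Finset.sum_const,
      nsmul_eq_mul, mul_one, Finset.mul_sum]
  have hC : (∑ x ∈ V, ∑ y ∈ nbrs x \ V,
        ∑ i : Bool, ∑ j : Bool, tOf V τ x i * sval (ξ y))
      = 4 * ∑ x ∈ V, ∑ y ∈ nbrs x \ V, sOf V ξ f x * sval (ξ y) := by
    rw [Finset.mul_sum]
    refine Finset.sum_congr rfl fun x hx => ?_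
    rw [Finset.mul_sum]
    refine Finset.sum_congr rfl fun y _ => ?_
    have h1 := key ⟨x, hx⟩
    simp only [tOf, sOf, dif_pos hx, Fintype.sum_bool]
    linear_combination 2 * sval (ξ y) * h1
  unfold isingW bcW
  rw [hA, hB, hC, ← Real.exp_add]
  congr 1
  ring

open scoped Classical in
private lemma fiber_sum (d : ℕ) (V : Finset (Vtx d)) (E : Finset (Edge d))
    (hE : ∀ e ∈ E, IsSubgraphEdge V e) (β Δ : ℝ) (ξ : Vtx d → Spin)
    (f : ↥V → Spin) :
    (∑ τ : ↥V × Bool → Bool,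
        if ∀ x : ↥V, (pm (τ (x, false)) + pm (τ (x, true))) / 2 = sval (f x)
        then isingW V E β Δ ξ τ else 0)
      = bcW V E β Δ ξ f *
        (2 ^ V.card * Real.exp (-((Δ + Real.log 2) / 2) * V.card)) := by
  set C0 := bcW V E β Δ ξ f *
      Real.exp (Real.log 2 * ∑ x ∈ V, sOf V ξ f x ^ 2
        - (Δ + Real.log 2) / 2 * V.card) with hC0
  have step1 : (∑ τ : ↥V × Bool → Bool,
        if ∀ x : ↥V, (pm (τ (x, false)) + pm (τ (x, true))) / 2 = sval (f x)
        then isingW V E β Δ ξ τ else 0)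
      = ∑ τ : ↥V × Bool → Bool,
        if ∀ x : ↥V, Tm (τ (x, false)) (τ (x, true)) = f x then C0 else 0 := by
    refine Finset.sum_congr rfl fun τ _ => ?_
    have hiff : (∀ x : ↥V, (pm (τ (x, false)) + pm (τ (x, true))) / 2 = sval (f x))
        ↔ ∀ x : ↥V, Tm (τ (x, false)) (τ (x, true)) = f x :=
      forall_congr' fun x => cond_iff_aux _ _ _
    by_cases h : ∀ x : ↥V, Tm (τ (x, false)) (τ (x, true)) = f x
    · rw [if_pos (hiff.mpr h), if_pos h, isingW_fiber d V E hE β Δ ξ f τ h]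
    · rw [if_neg (fun hh => h (hiff.mp hh)), if_neg h]
  have hcard : (Finset.univ.filter fun τ : ↥V × Bool → Bool =>
        ∀ x : ↥V, Tm (τ (x, false)) (τ (x, true)) = f x).card
      = 2 ^ (Finset.univ.filter fun x : ↥V => f x = 1).card := by
    rw [← Fintype.card_subtype]
    have e : {τ : ↥V × Bool → Bool // ∀ x : ↥V, Tm (τ (x, false)) (τ (x, true)) = f x}
        ≃ {g : ↥V → Bool → Bool // ∀ x : ↥V,
            g x ∈ Finset.univ.filter fun h : Bool → Bool => Tm (h false) (h true) = f x} :=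
      (Equiv.curry _ _ _).subtypeEquiv fun τ => by
        simp [Equiv.curry, Function.curry]
    rw [Fintype.card_congr e, Fintype.card_subtype]
    have hpi : (Finset.univ.filter fun g : ↥V → Bool → Bool => ∀ x : ↥V,
          g x ∈ Finset.univ.filter fun h : Bool → Bool => Tm (h false) (h true) = f x)
        = Fintype.piFinset fun x : ↥V =>
            Finset.univ.filter fun h : Bool → Bool => Tm (h false) (h true) = f x := by
      ext g
      simp [Fintype.mem_piFinset]
    rw [hpi, Fintype.card_piFinset]
    rw [Finset.prod_congr rfl fun x _ => Scard (f x)]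
    simp [Finset.prod_ite, Finset.prod_const]
  have hS : (∑ x ∈ V, sOf V ξ f x ^ 2)
      = ((Finset.univ.filter fun x : ↥V => ¬ f x = 1).card : ℝ) := by
    rw [← Finset.sum_attach V (fun x => sOf V ξ f x ^ 2), ← Finset.univ_eq_attach]
    have hpt : ∀ x : ↥V, sOf V ξ f ↑x ^ 2 = if f x = 1 then (0 : ℝ) else 1 := fun x => by
      simp only [sOf, dif_pos x.2]
      exact sval_sq (f x)
    rw [Finset.sum_congr rfl fun x _ => hpt x, Finset.sum_ite, Finset.sum_const,
      Finset.sum_const, smul_zero, zero_add, nsmul_eq_mul, mul_one]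
  have hzn : (Finset.univ.filter fun x : ↥V => f x = 1).card
      + (Finset.univ.filter fun x : ↥V => ¬ f x = 1).card = V.card := by
    rw [Finset.card_filter_add_card_filter_not, Finset.card_univ, Fintype.card_coe]
  rw [step1, Finset.sum_ite, Finset.sum_const, Finset.sum_const_zero, add_zero,
    nsmul_eq_mul, hcard, hC0, hS]
  have h2 : Real.exp (Real.log 2
        * ((Finset.univ.filter fun x : ↥V => ¬ f x = 1).card : ℝ)
        - (Δ + Real.log 2) / 2 * V.card)
      = 2 ^ (Finset.univ.filter fun x : ↥V => ¬ f x = 1).card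
        * Real.exp (-((Δ + Real.log 2) / 2) * V.card) := by
    rw [sub_eq_add_neg, Real.exp_add, ← neg_mul]
    congr 1
    rw [mul_comm, Real.exp_nat_mul, Real.exp_log two_pos]
  rw [h2]
  have hpow : ((2 : ℝ) ^ (Finset.univ.filter fun x : ↥V => f x = 1).card)
      * 2 ^ (Finset.univ.filter fun x : ↥V => ¬ f x = 1).card = 2 ^ V.card := by
    rw [← pow_add, hzn]
  push_cast
  rw [← hpow]
  ring

open scoped Classical in
/-- **Lemma 4.2** (Combinatorial mapping from Blume–Capel to Ising).  Let `G = (V,E)` be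
a finite subgraph of `ℤ^d`, `β > 0`, `Δ ∈ ℝ` and `ξ ∈ {-1,0,1}^{ℤ^d}`.  Then, for every
`η ∈ {-1,0,1}^V`,
`μ^ξ_{G,β,Δ}(σ = η) = μ^{Ising,ℓ(ξ)}_{ℓ(G),J}(τ ∈ T⁻¹(η))`,
where `T(τ)_x = (τ_{(x,0)} + τ_{(x,1)})/2`. -/
theorem blume_capel_to_ising (d : ℕ) (V : Finset (Vtx d)) (E : Finset (Edge d))
    (hE : ∀ e ∈ E, IsSubgraphEdge V e) (β Δ : ℝ) (hβ : 0 < β)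
    (ξ : Vtx d → Spin) (η : ↥V → Spin) :
    bcW V E β Δ ξ η / (∑ f : ↥V → Spin, bcW V E β Δ ξ f)
      = (∑ τ : ↥V × Bool → Bool,
          if ∀ x : ↥V, (pm (τ (x, false)) + pm (τ (x, true))) / 2 = sval (η x)
          then isingW V E β Δ ξ τ else 0)
        / ∑ τ : ↥V × Bool → Bool, isingW V E β Δ ξ τ := by
  classical
  have hnum := fiber_sum d V E hE β Δ ξ η
  have hpart : (∑ f : ↥V → Spin, ∑ τ : ↥V × Bool → Bool,
        if ∀ x : ↥V, (pm (τ (x, false)) + pm (τ (x, true))) / 2 = sval (f x)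
        then isingW V E β Δ ξ τ else 0)
      = ∑ τ : ↥V × Bool → Bool, isingW V E β Δ ξ τ := by
    rw [Finset.sum_comm]
    refine Finset.sum_congr rfl fun τ _ => ?_
    have hiff : ∀ g : ↥V → Spin,
        (∀ x : ↥V, (pm (τ (x, false)) + pm (τ (x, true))) / 2 = sval (g x))
          ↔ (fun x : ↥V => Tm (τ (x, false)) (τ (x, true))) = g := fun g => by
      rw [funext_iff]
      exact forall_congr' fun x => cond_iff_aux _ _ _
    rw [Finset.sum_congr rfl fun g _ => if_congr (hiff g) rfl rfl, Finset.sum_ite_eq]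
    simp
  have hden : (∑ τ : ↥V × Bool → Bool, isingW V E β Δ ξ τ)
      = (∑ f : ↥V → Spin, bcW V E β Δ ξ f)
        * (2 ^ V.card * Real.exp (-((Δ + Real.log 2) / 2) * V.card)) := by
    rw [← hpart, Finset.sum_mul]
    exact Finset.sum_congr rfl fun f _ => fiber_sum d V E hE β Δ ξ f
  have hCne : (2 : ℝ) ^ V.card * Real.exp (-((Δ + Real.log 2) / 2) * V.card) ≠ 0 := by
    positivity
  rw [hnum, hden, mul_div_mul_right _ _ hCne]


end BCIsing
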